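/- For every natural number m, the sum over k from 0 to m of ((2k)! / (k! * (k+1)!)) * ((2m-2k)! / ((m-k)! * (m-k)!)) equals binom(2m+1, m). -/

import Mathlib

open Nat Finset

open PowerSeries in
private lemma key_sum (n : ℕ) :
    2 * ∑ k ∈ Finset.range (n + 1), (catalan k * Nat.centralBinom (n - k) : ℚ)
      = (Nat.centralBinom (n + 1) : ℚ) := by
  set B : ℚ⟦X⟧ := PowerSeries.mk (fun n => (Nat.centralBinom n : ℚ)) with hBdef
  set Cs : ℚ⟦X⟧ := PowerSeries.mk (fun n => (catalan n : ℚ)) with hCdef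
  -- Catalan recurrence: X * Cs ^ 2 = Cs - 1
  have hC : X * Cs ^ 2 = Cs - 1 := by
    ext m
    cases m with
    | zero => simp [hCdef, PowerSeries.coeff_zero_eq_constantCoeff]
    | succ m =>
      rw [PowerSeries.coeff_succ_X_mul, sq, PowerSeries.coeff_mul]
      simp only [hCdef, PowerSeries.coeff_mk, map_sub, PowerSeries.coeff_one,
        Nat.succ_ne_zero, if_false, sub_zero]
      rw [catalan_succ' m]
      push_cast
      rfl
  have h4C : (4 : ℚ⟦X⟧) = PowerSeries.C 4 := (map_ofNat _ 4).symm
  have h2C : (2 : ℚ⟦X⟧) = PowerSeries.C 2 := (map_ofNat _ 2).symm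
  -- ODE for B : B' = 4 * (X * B') + 2 * B
  have hB' : (1 - 4 * X) * d⁄dX ℚ B = 2 * B := by
    have hB : d⁄dX ℚ B = 4 * (X * d⁄dX ℚ B) + 2 * B := by
      ext m
      rw [map_add, h4C, h2C, PowerSeries.coeff_C_mul, PowerSeries.coeff_C_mul]
      cases m with
      | zero =>
        simp [hBdef, PowerSeries.coeff_derivative, PowerSeries.coeff_zero_eq_constantCoeff,
          Nat.centralBinom, Nat.choose]
      | succ m =>
        rw [PowerSeries.coeff_succ_X_mul, PowerSeries.coeff_derivative,
          PowerSeries.coeff_derivative]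
        simp only [hBdef, PowerSeries.coeff_mk]
        have h := Nat.succ_mul_centralBinom_succ (m + 1)
        have h' : ((m + 2 : ℕ) : ℚ) * (Nat.centralBinom (m + 2) : ℚ)
            = 2 * (2 * (m + 1) + 1 : ℕ) * (Nat.centralBinom (m + 1) : ℚ) := by
          exact_mod_cast congrArg (Nat.cast (R := ℚ)) h
        push_cast at h' ⊢
        nlinarith [h']
    linear_combination hB
  have hY2 : (1 - 2 * (X * Cs)) ^ 2 = 1 - 4 * X := by
    have h : (1 - 2 * (X * Cs)) ^ 2 = 1 - 4 * (X * Cs) + 4 * (X * (X * Cs ^ 2)) := by ring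
    rw [h, hC]; ring
  -- differentiate hY2
  have hd4 : d⁄dX ℚ (1 - 4 * X : ℚ⟦X⟧) = -4 := by
    rw [map_sub, h4C, Derivation.leibniz, PowerSeries.derivative_C, PowerSeries.derivative_X]
    simp [smul_eq_mul]
  have hYY' : (1 - 2 * (X * Cs)) * d⁄dX ℚ (1 - 2 * (X * Cs)) = -2 := by
    have h := congrArg (d⁄dX ℚ) hY2
    rw [hd4, sq, Derivation.leibniz] at h
    simp only [smul_eq_mul] at h
    have h2ne : (2 : ℚ⟦X⟧) ≠ 0 := by
      intro hh
      have := congrArg (PowerSeries.constantCoeff) hh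
      rw [map_ofNat] at this
      norm_num at this
    apply mul_left_cancel₀ h2ne
    linear_combination h
  -- P = B * Y has zero derivative
  have h0 : (1 - 2 * (X * Cs)) * d⁄dX ℚ (B * (1 - 2 * (X * Cs))) = 0 := by
    rw [Derivation.leibniz]
    simp only [smul_eq_mul]
    linear_combination B * hYY' + (d⁄dX ℚ B) * hY2 + hB'
  have hYne : (1 - 2 * (X * Cs)) ≠ 0 := by
    intro h
    have := congrArg (PowerSeries.constantCoeff) h
    simp [hCdef] at this
  have hdP : d⁄dX ℚ (B * (1 - 2 * (X * Cs))) = 0 :=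
    (mul_eq_zero.mp h0).resolve_left hYne
  have hP1 : B * (1 - 2 * (X * Cs)) = 1 := by
    apply PowerSeries.derivative.ext (hD := by rw [hdP]; simp)
    simp [hBdef, hCdef, Nat.centralBinom, Nat.choose]
  have hP2 : B = 1 + 2 * (X * (Cs * B)) := by linear_combination hP1
  have hco := congrArg (PowerSeries.coeff (n + 1)) hP2
  rw [map_add, h2C, PowerSeries.coeff_C_mul, PowerSeries.coeff_succ_X_mul,
    PowerSeries.coeff_mul, PowerSeries.coeff_one, if_neg (Nat.succ_ne_zero n)] at hco
  simp only [hBdef, hCdef, PowerSeries.coeff_mk, zero_add] at hco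
  rw [Nat.sum_antidiagonal_eq_sum_range_succ
    (fun i j => ((catalan i : ℚ) * (Nat.centralBinom j : ℚ))) n] at hco
  rw [← hco]

theorem stmt_3 (m : ℕ) :
    (∑ k ∈ Finset.range (m + 1),
      (((2 * k)! : ℚ) / (k ! * (k + 1)!)) *
      (((2 * m - 2 * k)! : ℚ) / ((m - k)! * (m - k)!)))
      = ((2 * m + 1).choose m : ℚ) := by
  have hsum : (∑ k ∈ Finset.range (m + 1),
      (((2 * k)! : ℚ) / (k ! * (k + 1)!)) *
      (((2 * m - 2 * k)! : ℚ) / ((m - k)! * (m - k)!)))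
      = ∑ k ∈ Finset.range (m + 1), (catalan k * Nat.centralBinom (m - k) : ℚ) := by
    refine Finset.sum_congr rfl fun k hk => ?_
    have hkm : k ≤ m := Nat.lt_succ_iff.mp (Finset.mem_range.mp hk)
    have e1 : ((2 * k)! : ℚ) / (k ! * (k + 1)!) = (catalan k : ℚ) := by
      have hc := succ_mul_catalan_eq_centralBinom k
      have hc' : ((k + 1 : ℕ) : ℚ) * (catalan k : ℚ) = ((2 * k).choose k : ℚ) := by
        rw [← Nat.centralBinom_eq_two_mul_choose]
        exact_mod_cast congrArg (Nat.cast (R := ℚ)) hc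
      rw [Nat.cast_choose ℚ (by omega : k ≤ 2 * k)] at hc'
      have h2k : 2 * k - k = k := by omega
      rw [h2k] at hc'
      rw [Nat.factorial_succ]
      have hk0 : (k ! : ℚ) ≠ 0 := by exact_mod_cast (Nat.factorial_ne_zero k)
      have hk1 : ((k : ℚ) + 1) ≠ 0 := by positivity
      field_simp at hc' ⊢
      push_cast at hc' ⊢
      linarith [hc']
    have e2 : ((2 * m - 2 * k)! : ℚ) / ((m - k)! * (m - k)!) = (Nat.centralBinom (m - k) : ℚ) := by
      have h2 : 2 * m - 2 * k = 2 * (m - k) := by omega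
      rw [h2, Nat.centralBinom, Nat.cast_choose ℚ (by omega : m - k ≤ 2 * (m - k))]
      have h3 : 2 * (m - k) - (m - k) = m - k := by omega
      rw [h3]
    rw [e1, e2]
  rw [hsum]
  have hkey := key_sum m
  have hcb : (Nat.centralBinom (m + 1) : ℚ) = 2 * ((2 * m + 1).choose m : ℚ) := by
    have : Nat.centralBinom (m + 1) = 2 * (2 * m + 1).choose m := by
      rw [Nat.centralBinom]
      have h1 : 2 * (m + 1) = (2 * m + 1) + 1 := by omega
      rw [h1, Nat.choose_succ_succ, Nat.choose_symm_half]
      omega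
    exact_mod_cast congrArg (Nat.cast (R := ℚ)) this
  rw [hcb] at hkey
  linarith [hkey]
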